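/- arXiv:1210.6416 — 3 statements merged into one kernel-verified Lean document; each statement's English description precedes it below -/
import Mathlib

section
/- Let T > 0, let K : (0,T) → [0,∞) be integrable on (0,T), let C ≥ 0, and let g : [0,T] → [0,∞) be a bounded measurable function satisfying g(t) ≤ C ∫₀ᵗ K(t−s) g(s) ds for every t ∈ [0,T]. Then g(t) = 0 for every t ∈ [0,T]. -/
open MeasureTheory

/-- Generalized Gronwall-type lemma with a possibly singular convolution kernel:
if `K : (0,T) → [0,∞)` is integrable on `(0,T)`, `C ≥ 0`, and `g : [0,T] → [0,∞)` is a
bounded measurable function with `g t ≤ C * ∫₀ᵗ K (t-s) g s ds` for every `t ∈ [0,T]`,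
then `g` vanishes identically on `[0,T]`. -/
theorem gronwall_singular_kernel
    (T : ℝ) (hT : 0 < T)
    (K : ℝ → ℝ)
    (hK_nonneg : ∀ t ∈ Set.Ioo (0:ℝ) T, 0 ≤ K t)
    (hK_int : IntegrableOn K (Set.Ioo (0:ℝ) T))
    (C : ℝ) (hC : 0 ≤ C)
    (g : ℝ → ℝ)
    (hg_meas : Measurable g)
    (hg_nonneg : ∀ t ∈ Set.Icc (0:ℝ) T, 0 ≤ g t)
    (hg_bdd : ∃ M : ℝ, ∀ t ∈ Set.Icc (0:ℝ) T, g t ≤ M)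
    (hineq : ∀ t ∈ Set.Icc (0:ℝ) T, g t ≤ C * ∫ s in Set.Ioo (0:ℝ) t, K (t - s) * g s) :
    ∀ t ∈ Set.Icc (0:ℝ) T, g t = 0 := by
  obtain ⟨M, hM⟩ := hg_bdd
  have h0T : (0:ℝ) ∈ Set.Icc (0:ℝ) T := ⟨le_refl 0, hT.le⟩
  have hM0 : 0 ≤ M := le_trans (hg_nonneg 0 h0T) (hM 0 h0T)
  have hK_int' : IntegrableOn K (Set.Ioc (0:ℝ) T) := by
    rw [IntegrableOn, ← Measure.restrict_congr_set Ioo_ae_eq_Ioc]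
    exact hK_int
  -- g 0 = 0
  have hg0 : g 0 = 0 := by
    have := hineq 0 h0T
    simp only [Set.Ioo_self, Measure.restrict_empty, integral_zero_measure, mul_zero] at this
    exact le_antisymm this (hg_nonneg 0 h0T)
  -- choose ε
  obtain ⟨ε, hε, hεT, hKε⟩ : ∃ ε : ℝ, 0 < ε ∧ ε ≤ T ∧
      C * ∫ u in Set.Ioo (0:ℝ) ε, K u ≤ 1/2 := by
    have hanti : Antitone (fun n : ℕ => Set.Ioo (0:ℝ) (T / (n+1))) := by
      intro m n hmn
      apply Set.Ioo_subset_Ioo le_rfl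
      apply div_le_div_of_nonneg_left hT.le (by positivity)
      exact_mod_cast by exact_mod_cast add_le_add_left (Nat.cast_le.mpr hmn) 1
    have hempty : (⋂ n : ℕ, Set.Ioo (0:ℝ) (T / (n+1))) = ∅ := by
      ext x
      simp only [Set.mem_iInter, Set.mem_Ioo, Set.mem_empty_iff_false, iff_false, not_forall]
      by_cases hx0 : 0 < x
      · obtain ⟨n, hn⟩ := exists_nat_gt (T / x)
        refine ⟨n, fun h => ?_⟩
        have hlt : T / (n+1) < x := by
          rw [div_lt_iff₀ (by positivity)]
          nlinarith [(div_lt_iff₀ hx0).mp hn, hx0]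
        exact absurd h.2 (not_lt.mpr hlt.le)
      · exact ⟨0, fun h => hx0 h.1⟩
    have htend : Filter.Tendsto (fun n : ℕ => ∫ u in Set.Ioo (0:ℝ) (T/(n+1)), K u)
        Filter.atTop (nhds 0) := by
      have := tendsto_setIntegral_of_antitone (μ := volume) (f := K)
        (fun n : ℕ => measurableSet_Ioo) hanti ⟨0, by
          simpa using hK_int.mono_set (Set.Ioo_subset_Ioo le_rfl (by norm_num))⟩
      rw [hempty] at this
      simpa using this
    have : Filter.Tendsto (fun n : ℕ => C * ∫ u in Set.Ioo (0:ℝ) (T/(n+1)), K u)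
        Filter.atTop (nhds 0) := by simpa using htend.const_mul C
    have := (this.eventually_le_const (by norm_num : (0:ℝ) < 1/2)).exists
    obtain ⟨n, hn⟩ := this
    exact ⟨T / (n+1), by positivity, by
      rw [div_le_iff₀ (by positivity)]
      nlinarith [Nat.cast_nonneg (α := ℝ) n], hn⟩
  -- key step
  have key : ∀ a : ℝ, 0 ≤ a → (∀ s ∈ Set.Icc (0:ℝ) T, s ≤ a → g s = 0) →
      ∀ t ∈ Set.Icc (0:ℝ) T, t ≤ a + ε → g t = 0 := by
    intro a ha h0
    have bound : ∀ k : ℕ, ∀ t ∈ Set.Icc (0:ℝ) T, t ≤ a + ε → g t ≤ (1/2)^k * M := by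
      intro k
      induction k with
      | zero => intro t ht _; simpa using hM t ht
      | succ k ih =>
        intro t ht hta
        by_cases hat : t ≤ a
        · rw [h0 t ht hat]; positivity
        push_neg at hat
        have ht0 : 0 < t := lt_of_le_of_lt ha hat
        set c : ℝ := (1/2)^k * M with hc
        have hc0 : 0 ≤ c := by positivity
        have hsub : Set.Ioo a t ⊆ Set.Ioo (0:ℝ) t := Set.Ioo_subset_Ioo ha le_rfl
        -- integrability of s ↦ K (t - s) on Ioo a t
        have hKta : IntegrableOn (fun s => K (t - s)) (Set.Ioo a t) := by
          have h1 : IntervalIntegrable K volume 0 (t - a) := by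
            rw [intervalIntegrable_iff_integrableOn_Ioc_of_le (by linarith)]
            exact hK_int'.mono_set (Set.Ioc_subset_Ioc le_rfl (by linarith [ht.2]))
          have h2 := h1.comp_sub_left t
          simp only [sub_zero, sub_sub_cancel] at h2
          replace h2 := h2.symm
          rw [intervalIntegrable_iff_integrableOn_Ioc_of_le hat.le] at h2
          exact h2.mono_set Set.Ioo_subset_Ioc_self
        set B : ℝ → ℝ := Set.indicator (Set.Ioo a t) (fun s => K (t - s) * c) with hB
        have hBint : Integrable B (volume.restrict (Set.Ioo (0:ℝ) t)) := by
          apply Integrable.integrableOn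
          exact IntegrableOn.integrable_indicator (hKta.mul_const c) measurableSet_Ioo
        have hstep1 : (∫ s in Set.Ioo (0:ℝ) t, K (t - s) * g s) ≤ ∫ s in Set.Ioo (0:ℝ) t, B s := by
          apply integral_mono_of_nonneg _ hBint
          · rw [Filter.EventuallyLE, ae_restrict_iff' measurableSet_Ioo]
            apply Filter.Eventually.of_forall
            intro s hs
            have hsT : s ∈ Set.Icc (0:ℝ) T := ⟨hs.1.le, le_trans hs.2.le ht.2⟩
            by_cases hsa : s ≤ a
            · rw [h0 s hsT hsa, mul_zero, hB]
              exact Set.indicator_nonneg (fun x hx => mul_nonneg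
                (hK_nonneg _ ⟨by linarith [hx.2], by linarith [hx.1, hs.1, ht.2]⟩) hc0) s
            · push_neg at hsa
              have hmem : s ∈ Set.Ioo a t := ⟨hsa, hs.2⟩
              rw [hB, Set.indicator_of_mem hmem]
              have hKn : 0 ≤ K (t - s) :=
                hK_nonneg _ ⟨by linarith [hs.2], by linarith [hs.1, ht.2]⟩
              exact mul_le_mul_of_nonneg_left
                (ih s hsT (le_of_lt (lt_of_lt_of_le hs.2 hta))) hKn
          · rw [Filter.EventuallyLE, ae_restrict_iff' measurableSet_Ioo]
            apply Filter.Eventually.of_forall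
            intro s hs
            have hsT : s ∈ Set.Icc (0:ℝ) T := ⟨hs.1.le, le_trans hs.2.le ht.2⟩
            simp only [Pi.zero_apply]
            by_cases hsa : s ≤ a
            · rw [h0 s hsT hsa, mul_zero]
            · push_neg at hsa
              have hKn : 0 ≤ K (t - s) :=
                hK_nonneg _ ⟨by linarith [hs.2], by linarith [hs.1, ht.2]⟩
              exact mul_nonneg hKn (hg_nonneg s hsT)
        have hstep2 : (∫ s in Set.Ioo (0:ℝ) t, B s) = (∫ s in Set.Ioo a t, K (t - s)) * c := by
          rw [hB, setIntegral_indicator measurableSet_Ioo,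
            Set.inter_eq_self_of_subset_right hsub, integral_mul_const]
        have hstep3 : (∫ s in Set.Ioo a t, K (t - s)) = ∫ u in Set.Ioo (0:ℝ) (t - a), K u := by
          rw [← integral_Ioc_eq_integral_Ioo, ← integral_Ioc_eq_integral_Ioo,
            ← intervalIntegral.integral_of_le hat.le, ← intervalIntegral.integral_of_le
              (by linarith : (0:ℝ) ≤ t - a),
            intervalIntegral.integral_comp_sub_left K t]
          norm_num
        have hstep4 : (∫ u in Set.Ioo (0:ℝ) (t - a), K u) ≤ ∫ u in Set.Ioo (0:ℝ) ε, K u := by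
          apply setIntegral_mono_set
          · exact hK_int.mono_set (Set.Ioo_subset_Ioo le_rfl hεT)
          · rw [Filter.EventuallyLE, ae_restrict_iff' measurableSet_Ioo]
            exact Filter.Eventually.of_forall fun u hu =>
              hK_nonneg u ⟨hu.1, lt_of_lt_of_le hu.2 hεT⟩
          · exact Filter.Eventually.of_forall (Set.Ioo_subset_Ioo le_rfl (by linarith))
        have hIK0 : 0 ≤ ∫ u in Set.Ioo (0:ℝ) ε, K u := by
          apply setIntegral_nonneg measurableSet_Ioo
          exact fun u hu => hK_nonneg u ⟨hu.1, lt_of_lt_of_le hu.2 hεT⟩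
        calc g t ≤ C * ∫ s in Set.Ioo (0:ℝ) t, K (t - s) * g s := hineq t ht
          _ ≤ C * ∫ s in Set.Ioo (0:ℝ) t, B s := by
              apply mul_le_mul_of_nonneg_left hstep1 hC
          _ = (C * ∫ s in Set.Ioo a t, K (t - s)) * c := by rw [hstep2]; ring
          _ ≤ (C * ∫ u in Set.Ioo (0:ℝ) ε, K u) * c := by
              apply mul_le_mul_of_nonneg_right _ hc0
              rw [hstep3]
              exact mul_le_mul_of_nonneg_left hstep4 hC
          _ ≤ (1/2) * c := mul_le_mul_of_nonneg_right hKε hc0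
          _ = (1/2)^(k+1) * M := by rw [hc]; ring
    intro t ht hta
    have hlim : Filter.Tendsto (fun k : ℕ => (1/2:ℝ)^k * M) Filter.atTop (nhds 0) := by
      have := tendsto_pow_atTop_nhds_zero_of_lt_one (by norm_num : (0:ℝ) ≤ 1/2)
        (by norm_num : (1/2:ℝ) < 1)
      simpa using this.mul_const M
    have hle : g t ≤ 0 := ge_of_tendsto' hlim (fun k => bound k t ht hta)
    exact le_antisymm hle (hg_nonneg t ht)
  -- outer induction
  have main : ∀ n : ℕ, ∀ t ∈ Set.Icc (0:ℝ) T, t ≤ n * ε → g t = 0 := by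
    intro n
    induction n with
    | zero =>
      intro t ht h
      simp only [Nat.cast_zero, zero_mul] at h
      have : t = 0 := le_antisymm h ht.1
      rw [this]; exact hg0
    | succ n ih =>
      intro t ht h
      apply key (n * ε) (by positivity) ih t ht
      push_cast at h
      linarith
  intro t ht
  obtain ⟨n, hn⟩ := exists_nat_ge (t / ε)
  apply main n t ht
  rw [div_le_iff₀ hε] at hn
  linarith
end

section
/- Let t₀ > 0 and let h : [0,∞) → [0,∞) be bounded on compact intervals. Assume that for every s₀ ≥ 0, sup_{s ∈ [s₀, s₀+t₀]} h(s) ≤ 3 h(s₀) + (1/2) sup_{s ∈ [s₀, s₀+t₀]} h(s). Then h(t) ≤ 6^{1 + t/t₀} · h(0) for all t ≥ 0. -/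
/-- Iteration lemma for the dimension-free gradient estimate: if `h : [0,∞) → [0,∞)` is
bounded on compact intervals and for every `s₀ ≥ 0`,
`sup_{s ∈ [s₀, s₀+t₀]} h(s) ≤ 3 h(s₀) + (1/2) sup_{s ∈ [s₀, s₀+t₀]} h(s)`,
then `h(t) ≤ 6^{1 + t/t₀} h(0)` for all `t ≥ 0`. -/
theorem iteration_exponential_bound
    (t₀ : ℝ) (ht₀ : 0 < t₀)
    (h : ℝ → ℝ)
    (h_nonneg : ∀ t, 0 ≤ t → 0 ≤ h t)
    (h_bdd : ∀ T : ℝ, BddAbove (h '' Set.Icc 0 T))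
    (hyp : ∀ s₀ : ℝ, 0 ≤ s₀ →
      sSup (h '' Set.Icc s₀ (s₀ + t₀))
        ≤ 3 * h s₀ + (1 / 2) * sSup (h '' Set.Icc s₀ (s₀ + t₀))) :
    ∀ t : ℝ, 0 ≤ t → h t ≤ (6 : ℝ) ^ (1 + t / t₀) * h 0 := by
  -- Step lemma: h s ≤ 6 * h s₀ for s ∈ [s₀, s₀ + t₀]
  have step : ∀ s₀ : ℝ, 0 ≤ s₀ → ∀ s ∈ Set.Icc s₀ (s₀ + t₀), h s ≤ 6 * h s₀ := by
    intro s₀ hs₀ s hs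
    have hbdd : BddAbove (h '' Set.Icc s₀ (s₀ + t₀)) := by
      apply BddAbove.mono _ (h_bdd (s₀ + t₀))
      exact Set.image_mono (Set.Icc_subset_Icc_left hs₀)
    have hmem : h s ∈ h '' Set.Icc s₀ (s₀ + t₀) := Set.mem_image_of_mem _ hs
    have hle : h s ≤ sSup (h '' Set.Icc s₀ (s₀ + t₀)) := le_csSup hbdd hmem
    have h6 : sSup (h '' Set.Icc s₀ (s₀ + t₀)) ≤ 6 * h s₀ := by
      have := hyp s₀ hs₀; linarith
    linarith
  -- h (n * t₀) ≤ 6 ^ n * h 0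
  have base : ∀ n : ℕ, h (n * t₀) ≤ 6 ^ n * h 0 := by
    intro n
    induction n with
    | zero => simp
    | succ n ih =>
      have hn : (0:ℝ) ≤ n * t₀ := by positivity
      have hmem : ((n+1 : ℕ) : ℝ) * t₀ ∈ Set.Icc ((n:ℝ) * t₀) ((n:ℝ) * t₀ + t₀) := by
        constructor
        · push_cast; nlinarith
        · push_cast; nlinarith
      have := step ((n:ℝ) * t₀) hn _ hmem
      have h6n : (0:ℝ) ≤ 6 ^ n := by positivity
      calc h (((n+1:ℕ):ℝ) * t₀) ≤ 6 * h ((n:ℝ) * t₀) := this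
        _ ≤ 6 * (6 ^ n * h 0) := by linarith
        _ = 6 ^ (n+1) * h 0 := by ring
  intro t ht
  set n : ℕ := ⌊t / t₀⌋₊ with hn
  have hnle : (n : ℝ) ≤ t / t₀ := Nat.floor_le (by positivity)
  have hlt : t / t₀ < n + 1 := Nat.lt_floor_add_one _
  have hmem : t ∈ Set.Icc ((n:ℝ) * t₀) ((n:ℝ) * t₀ + t₀) := by
    constructor
    · calc (n:ℝ) * t₀ ≤ (t / t₀) * t₀ := by nlinarith
        _ = t := by field_simp
    · have : t = (t / t₀) * t₀ := by field_simp
      nlinarith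
  have hnn : (0:ℝ) ≤ (n:ℝ) * t₀ := by positivity
  have h1 : h t ≤ 6 * h ((n:ℝ) * t₀) := step _ hnn t hmem
  have h2 : h ((n:ℝ) * t₀) ≤ 6 ^ n * h 0 := base n
  have h3 : h t ≤ 6 ^ (n+1) * h 0 := by
    have : (0:ℝ) ≤ 6 ^ n := by positivity
    calc h t ≤ 6 * (6 ^ n * h 0) := by linarith
      _ = 6 ^ (n+1) * h 0 := by ring
  have hpow : (6:ℝ) ^ (n+1) ≤ (6:ℝ) ^ (1 + t / t₀) := by
    rw [show ((6:ℝ) ^ (n+1) : ℝ) = (6:ℝ) ^ ((n+1 : ℕ) : ℝ) from (Real.rpow_natCast 6 (n+1)).symm]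
    apply Real.rpow_le_rpow_of_exponent_le (by norm_num)
    push_cast; linarith
  have h0 : 0 ≤ h 0 := h_nonneg 0 le_rfl
  calc h t ≤ 6 ^ (n+1) * h 0 := h3
    _ ≤ (6:ℝ) ^ (1 + t / t₀) * h 0 := by
        exact mul_le_mul_of_nonneg_right hpow h0
end

section
/- Let d ≥ 1 be an integer, let α > d be real, let δ > 0, and let ε ∈ (0, (α−d)/α). Then ∫₀¹ s^{−ε} (Σ_{m=1}^∞ m e^{−δ s m^{2α/d}}) ds < ∞. -/
open MeasureTheory
open scoped ENNReal

lemma exp_neg_le_rpow_neg {x p : ℝ} (hx : 0 < x) (hp : 0 < p) (hp1 : p ≤ 1) :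
    Real.exp (-x) ≤ x ^ (-p) := by
  rw [Real.rpow_neg hx.le]
  rcases le_or_gt x 1 with h | h
  · have h1 : x ^ p ≤ 1 := Real.rpow_le_one hx.le h hp.le
    have h2 : (0:ℝ) < x ^ p := Real.rpow_pos_of_pos hx p
    calc Real.exp (-x) ≤ 1 := by rw [Real.exp_le_one_iff]; linarith
      _ ≤ (x ^ p)⁻¹ := (one_le_inv₀ h2).2 h1
  · have h1 : x ^ p ≤ x := by
      calc x ^ p ≤ x ^ (1:ℝ) := Real.rpow_le_rpow_of_exponent_le h.le hp1
        _ = x := Real.rpow_one x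
    have h2 : x ≤ Real.exp x := by linarith [Real.add_one_le_exp x]
    rw [Real.exp_neg]
    exact inv_anti₀ (Real.rpow_pos_of_pos hx p) (h1.trans h2)

/-- Singular-weight integrability of the kernel `K_σ(s) = Σ_{m≥1} m e^{-δ s m^{2α/d}}`:
for `d ≥ 1`, `α > d`, `δ > 0` and `ε ∈ (0, (α-d)/α)`,
`∫₀¹ s^{-ε} Σ_{m≥1} m e^{-δ s m^{2α/d}} ds < ∞`. -/
theorem singular_weight_integrability_case_alpha_gt_d
    (d : ℕ) (hd : 1 ≤ d) (α δ ε : ℝ) (hα : (d : ℝ) < α) (hδ : 0 < δ)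
    (hε : ε ∈ Set.Ioo 0 ((α - d) / α)) :
    ∫⁻ s in Set.Ioo (0:ℝ) 1,
        ENNReal.ofReal (s ^ (-ε)) *
          ∑' m : ℕ+, ENNReal.ofReal
            (((m : ℕ) : ℝ) * Real.exp (-δ * s * ((m : ℕ) : ℝ) ^ (2 * α / (d : ℝ)))) < ⊤ := by
  obtain ⟨hε0, hε1⟩ := hε
  have hd0 : (0:ℝ) < d := by exact_mod_cast hd
  have hα0 : (0:ℝ) < α := hd0.trans hα
  set β : ℝ := 2 * α / (d : ℝ) with hβ_def
  have hβ0 : 0 < β := by positivity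
  set p : ℝ := ((d : ℝ) / α + (1 - ε)) / 2 with hp_def
  have hε1' : ε * α < α - d := (lt_div_iff₀ hα0).1 hε1
  have hdα : (d : ℝ) / α < 1 - ε := by
    rw [div_lt_iff₀ hα0]; nlinarith
  have hda_pos : 0 < (d : ℝ) / α := div_pos hd0 hα0
  have hp_pos : 0 < p := by rw [hp_def]; linarith
  have hp_lt : p < 1 - ε := by rw [hp_def]; linarith
  have hp1 : p ≤ 1 := by linarith
  have hdp : (d : ℝ) / α < p := by rw [hp_def]; linarith
  have hpβ : 2 < p * β := by
    have h2 : ((d : ℝ) / α) * β = 2 := by rw [hβ_def]; field_simp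
    nlinarith
  set c : ℝ := 1 - p * β with hc_def
  have hc : c < -1 := by rw [hc_def]; linarith
  -- the finite sum
  set S : ℝ≥0∞ := ∑' m : ℕ+, ENNReal.ofReal (((m : ℕ) : ℝ) ^ c) with hS_def
  have hS : S ≠ ⊤ := by
    have hinj : Function.Injective (fun m : ℕ+ => (m : ℕ)) := fun a b h =>
      PNat.coe_injective h
    have h1 : S ≤ ∑' n : ℕ, ENNReal.ofReal ((n : ℝ) ^ c) :=
      ENNReal.tsum_comp_le_tsum_of_injective hinj (fun n => ENNReal.ofReal ((n : ℝ) ^ c))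
    have hsum : Summable (fun n : ℕ => (n : ℝ) ^ c) := Real.summable_nat_rpow.2 hc
    have h2 : ∑' n : ℕ, ENNReal.ofReal ((n : ℝ) ^ c)
        = ENNReal.ofReal (∑' n : ℕ, (n : ℝ) ^ c) :=
      (ENNReal.ofReal_tsum_of_nonneg
        (fun n => Real.rpow_nonneg (Nat.cast_nonneg n) c) hsum).symm
    exact (lt_of_le_of_lt h1 (h2 ▸ ENNReal.ofReal_lt_top)).ne
  -- the finite singular integral
  have hεp : ε + p < 1 := by linarith
  have hI : ∫⁻ s in Set.Ioo (0:ℝ) 1, ENNReal.ofReal (s ^ (-(ε + p))) < ⊤ := by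
    have hint : IntegrableOn (fun s : ℝ => s ^ (-(ε + p))) (Set.Ioo (0:ℝ) 1) :=
      (intervalIntegral.integrableOn_Ioo_rpow_iff one_pos).2 (by linarith)
    exact hint.setLIntegral_lt_top
  -- pointwise bound
  have key : ∀ s ∈ Set.Ioo (0:ℝ) 1,
      ENNReal.ofReal (s ^ (-ε)) *
          ∑' m : ℕ+, ENNReal.ofReal
            (((m : ℕ) : ℝ) * Real.exp (-δ * s * ((m : ℕ) : ℝ) ^ β))
        ≤ ENNReal.ofReal (δ ^ (-p)) * S * ENNReal.ofReal (s ^ (-(ε + p))) := by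
    intro s hs
    obtain ⟨hs0, hs1⟩ := hs
    have hterm : ∀ m : ℕ+,
        ENNReal.ofReal (((m : ℕ) : ℝ) * Real.exp (-δ * s * ((m : ℕ) : ℝ) ^ β))
          ≤ ENNReal.ofReal (δ ^ (-p) * s ^ (-p)) * ENNReal.ofReal (((m : ℕ) : ℝ) ^ c) := by
      intro m
      have hm0 : (0:ℝ) < ((m : ℕ) : ℝ) := by exact_mod_cast m.pos
      have hmβ : (0:ℝ) < ((m : ℕ) : ℝ) ^ β := Real.rpow_pos_of_pos hm0 β
      have hx : (0:ℝ) < δ * s * ((m : ℕ) : ℝ) ^ β := by positivity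
      have hexp : Real.exp (-δ * s * ((m : ℕ) : ℝ) ^ β)
          ≤ (δ * s * ((m : ℕ) : ℝ) ^ β) ^ (-p) := by
        have h := exp_neg_le_rpow_neg hx hp_pos hp1
        rw [show -δ * s * ((m : ℕ) : ℝ) ^ β = -(δ * s * ((m : ℕ) : ℝ) ^ β) by ring]
        exact h
      have hreal : ((m : ℕ) : ℝ) * Real.exp (-δ * s * ((m : ℕ) : ℝ) ^ β)
          ≤ (δ ^ (-p) * s ^ (-p)) * ((m : ℕ) : ℝ) ^ c := by
        calc ((m : ℕ) : ℝ) * Real.exp (-δ * s * ((m : ℕ) : ℝ) ^ β)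
            ≤ ((m : ℕ) : ℝ) * (δ * s * ((m : ℕ) : ℝ) ^ β) ^ (-p) :=
              mul_le_mul_of_nonneg_left hexp hm0.le
          _ = (δ ^ (-p) * s ^ (-p)) * ((m : ℕ) : ℝ) ^ c := by
              rw [Real.mul_rpow (by positivity) hmβ.le, Real.mul_rpow hδ.le hs0.le,
                ← Real.rpow_mul hm0.le]
              have hmc : ((m : ℕ) : ℝ) * ((m : ℕ) : ℝ) ^ (β * (-p)) = ((m : ℕ) : ℝ) ^ c := by
                rw [show c = 1 + β * (-p) by rw [hc_def]; ring, Real.rpow_add hm0,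
                  Real.rpow_one]
              calc ((m : ℕ) : ℝ) * (δ ^ (-p) * s ^ (-p) * ((m : ℕ) : ℝ) ^ (β * (-p)))
                  = (δ ^ (-p) * s ^ (-p)) * (((m : ℕ) : ℝ) * ((m : ℕ) : ℝ) ^ (β * (-p))) := by
                    ring
                _ = (δ ^ (-p) * s ^ (-p)) * ((m : ℕ) : ℝ) ^ c := by rw [hmc]
      calc ENNReal.ofReal (((m : ℕ) : ℝ) * Real.exp (-δ * s * ((m : ℕ) : ℝ) ^ β))
          ≤ ENNReal.ofReal ((δ ^ (-p) * s ^ (-p)) * ((m : ℕ) : ℝ) ^ c) :=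
            ENNReal.ofReal_le_ofReal hreal
        _ = ENNReal.ofReal (δ ^ (-p) * s ^ (-p)) * ENNReal.ofReal (((m : ℕ) : ℝ) ^ c) :=
            ENNReal.ofReal_mul (by positivity)
    calc ENNReal.ofReal (s ^ (-ε)) *
          ∑' m : ℕ+, ENNReal.ofReal
            (((m : ℕ) : ℝ) * Real.exp (-δ * s * ((m : ℕ) : ℝ) ^ β))
        ≤ ENNReal.ofReal (s ^ (-ε)) *
          ∑' m : ℕ+, (ENNReal.ofReal (δ ^ (-p) * s ^ (-p)) * ENNReal.ofReal (((m : ℕ) : ℝ) ^ c)) :=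
          mul_le_mul_right (ENNReal.tsum_le_tsum hterm) _
      _ = ENNReal.ofReal (s ^ (-ε)) * (ENNReal.ofReal (δ ^ (-p) * s ^ (-p)) * S) := by
          rw [ENNReal.tsum_mul_left]
      _ = ENNReal.ofReal (δ ^ (-p)) * S * ENNReal.ofReal (s ^ (-(ε + p))) := by
          rw [ENNReal.ofReal_mul (by positivity), show s ^ (-(ε+p)) = s ^ (-ε) * s ^ (-p) by
            rw [← Real.rpow_add hs0]; ring_nf, ENNReal.ofReal_mul (by positivity)]
          ring
  -- conclude
  have hmeas : Measurable fun s : ℝ =>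
      ENNReal.ofReal (δ ^ (-p)) * S * ENNReal.ofReal (s ^ (-(ε + p))) :=
    (ENNReal.measurable_ofReal.comp (measurable_id.pow_const (-(ε+p)))).const_mul _
  calc ∫⁻ s in Set.Ioo (0:ℝ) 1,
        ENNReal.ofReal (s ^ (-ε)) *
          ∑' m : ℕ+, ENNReal.ofReal
            (((m : ℕ) : ℝ) * Real.exp (-δ * s * ((m : ℕ) : ℝ) ^ β))
      ≤ ∫⁻ s in Set.Ioo (0:ℝ) 1,
          ENNReal.ofReal (δ ^ (-p)) * S * ENNReal.ofReal (s ^ (-(ε + p))) :=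
        setLIntegral_mono hmeas key
    _ = ENNReal.ofReal (δ ^ (-p)) * S *
          ∫⁻ s in Set.Ioo (0:ℝ) 1, ENNReal.ofReal (s ^ (-(ε + p))) :=
        lintegral_const_mul' _ _ (by
          exact ENNReal.mul_ne_top ENNReal.ofReal_ne_top hS)
    _ < ⊤ := ENNReal.mul_lt_top
        (ENNReal.mul_lt_top ENNReal.ofReal_lt_top hS.lt_top) hI
end
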